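/- For every odd integer n ≥ 3, the cycle C_n admits a fuzzy magic labeling; that is, there exist a real number m with 0 < m ≤ 1 and functions α : {1, …, n} → ℝ and β : {1, …, n} → ℝ such that all values α(1), …, α(n), β(1), …, β(n) lie in (0, 1], these 2n values are pairwise distinct, β(j) < α(j) + α(j+1) for every 1 ≤ j ≤ n−1 and β(n) < α(n) + α(1), and α(j) + β(j) + α(j+1) = m for every 1 ≤ j ≤ n−1 as well as α(n) + β(n) + α(1) = m. -/

import Mathlib

/-- For every odd integer `n ≥ 3`, the cycle `C_n` with vertices `v_1, …, v_n`,
edges `v_j v_{j+1}` (`1 ≤ j ≤ n−1`) and the edge `v_n v_1`, admits a fuzzy magic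
labeling: there exist `m ∈ (0,1]` and labels `α, β` with values in `(0,1]`, all `2n`
values pairwise distinct, with `β j < α j + α (j+1)` for `1 ≤ j ≤ n−1`,
`β n < α n + α 1`, and the magic sum equal to `m` on every edge. -/
theorem odd_cycle_is_fuzzy_magic (n : ℕ) (hn : 3 ≤ n) (hodd : Odd n) :
    ∃ (m : ℝ) (α β : ℕ → ℝ),
      0 < m ∧ m ≤ 1 ∧
      (∀ k, 1 ≤ k → k ≤ n → 0 < α k ∧ α k ≤ 1) ∧
      (∀ j, 1 ≤ j → j ≤ n → 0 < β j ∧ β j ≤ 1) ∧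
      (∀ k k', 1 ≤ k → k ≤ n → 1 ≤ k' → k' ≤ n → k ≠ k' → α k ≠ α k') ∧
      (∀ j j', 1 ≤ j → j ≤ n → 1 ≤ j' → j' ≤ n → j ≠ j' → β j ≠ β j') ∧
      (∀ k j, 1 ≤ k → k ≤ n → 1 ≤ j → j ≤ n → α k ≠ β j) ∧
      (∀ j, 1 ≤ j → j ≤ n - 1 → β j < α j + α (j + 1)) ∧
      (β n < α n + α 1) ∧
      (∀ j, 1 ≤ j → j ≤ n - 1 → α j + β j + α (j + 1) = m) ∧
      (α n + β n + α 1 = m) := by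
  have hnR : (3:ℝ) ≤ (n:ℝ) := by exact_mod_cast hn
  have hn0 : (0:ℝ) < (n:ℝ) := by linarith
  obtain ⟨ε, hεpos, hnε, hεle⟩ : ∃ ε : ℝ, 0 < ε ∧ (n:ℝ) * ε = 1/8 ∧ ε ≤ 1/24 := by
    refine ⟨1/(8*(n:ℝ)), by positivity, ?_, ?_⟩
    · field_simp
    · rw [div_le_div_iff₀ (by linarith) (by norm_num)]
      linarith
  refine ⟨3/4 + ε/2,
    fun k => 1/4 + (k:ℝ) * ε,
    fun j => if j = n then 1/4 + ε/2 - ((n:ℝ)+1) * ε else 1/4 + ε/2 - (2*(j:ℝ)+1) * ε,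
    by linarith, by linarith, ?_, ?_, ?_, ?_, ?_, ?_, ?_, ?_, ?_⟩
  · intro k hk1 hkn
    have hkR : (k:ℝ) ≤ n := by exact_mod_cast hkn
    have hk0 : (0:ℝ) ≤ (k:ℝ) := Nat.cast_nonneg k
    constructor
    · nlinarith
    · nlinarith
  · intro j hj1 hjn
    have hjR : (j:ℝ) ≤ n := by exact_mod_cast hjn
    have hj1R : (1:ℝ) ≤ (j:ℝ) := by exact_mod_cast hj1
    by_cases h : j = n
    · simp only [if_pos h]
      constructor
      · nlinarith
      · nlinarith
    · simp only [if_neg h]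
      have hjlt : j < n := lt_of_le_of_ne hjn h
      have : (j:ℝ) + 1 ≤ n := by exact_mod_cast hjlt
      constructor
      · nlinarith
      · nlinarith
  · intro k k' _ _ _ _ hne
    have : (k:ℝ) ≠ (k':ℝ) := by exact_mod_cast hne
    intro h
    apply this
    have := mul_right_cancel₀ (ne_of_gt hεpos) (by linarith : (k:ℝ) * ε = (k':ℝ) * ε)
    exact this
  · intro j j' hj1 hjn hj'1 hj'n hne
    by_cases h : j = n <;> by_cases h' : j' = n
    · exact absurd (h.trans h'.symm) hne
    · simp only [if_pos h, if_neg h']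
      intro heq
      have : ((n:ℝ)+1) * ε = (2*(j':ℝ)+1) * ε := by linarith
      have h2 : (n:ℝ) + 1 = 2*(j':ℝ)+1 := mul_right_cancel₀ (ne_of_gt hεpos) this
      have : (n:ℝ) = 2*(j':ℝ) := by linarith
      have hne2 : n = 2 * j' := by exact_mod_cast this
      exact (Nat.not_even_iff_odd.mpr hodd) ⟨j', by omega⟩
    · simp only [if_neg h, if_pos h']
      intro heq
      have : (2*(j:ℝ)+1) * ε = ((n:ℝ)+1) * ε := by linarith
      have h2 : 2*(j:ℝ)+1 = (n:ℝ) + 1 := mul_right_cancel₀ (ne_of_gt hεpos) this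
      have : (n:ℝ) = 2*(j:ℝ) := by linarith
      have hne2 : n = 2 * j := by exact_mod_cast this
      exact (Nat.not_even_iff_odd.mpr hodd) ⟨j, by omega⟩
    · simp only [if_neg h, if_neg h']
      intro heq
      have : (2*(j:ℝ)+1) * ε = (2*(j':ℝ)+1) * ε := by linarith
      have h2 : 2*(j:ℝ)+1 = 2*(j':ℝ)+1 := mul_right_cancel₀ (ne_of_gt hεpos) this
      have : (j:ℝ) = (j':ℝ) := by linarith
      exact hne (by exact_mod_cast this)
  · intro k j hk1 hkn hj1 hjn
    have hk0 : (0:ℝ) ≤ (k:ℝ) := Nat.cast_nonneg k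
    by_cases h : j = n
    · simp only [if_pos h]
      intro heq
      nlinarith
    · simp only [if_neg h]
      have hj1R : (1:ℝ) ≤ (j:ℝ) := by exact_mod_cast hj1
      intro heq
      nlinarith
  · intro j hj1 hjn
    have hjlt : j ≠ n := by omega
    simp only [if_neg hjlt]
    have hj0 : (0:ℝ) ≤ (j:ℝ) := Nat.cast_nonneg j
    push_cast
    nlinarith
  · beta_reduce
    rw [show (if n = n then 1/4 + ε/2 - ((n:ℝ)+1) * ε else 1/4 + ε/2 - (2*(n:ℝ)+1) * ε) = 1/4 + ε/2 - ((n:ℝ)+1) * ε from if_pos rfl]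
    push_cast
    nlinarith
  · intro j hj1 hjn
    have hjlt : j ≠ n := by omega
    simp only [if_neg hjlt]
    push_cast
    ring
  · beta_reduce
    rw [show (if n = n then 1/4 + ε/2 - ((n:ℝ)+1) * ε else 1/4 + ε/2 - (2*(n:ℝ)+1) * ε) = 1/4 + ε/2 - ((n:ℝ)+1) * ε from if_pos rfl]
    push_cast
    ring
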